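/- arXiv:1410.6324 — 3 statements merged into one kernel-verified Lean document; each statement's English description precedes it below -/
import Mathlib

section
/- The map Hom(F^(β), F^(α)) → Hom_cont(F^α, F^β) sending a linear map f to its dual (adjoint) Hom(f,F) is a bijection between linear maps of direct sums and continuous linear maps of the corresponding products (F given the discrete topology, products the product topology). -/
open Finset

section Aux

variable {F : Type*} [Field F] [TopologicalSpace F] [DiscreteTopology F] {α : Type*}

/-- A continuous linear functional on a product of discrete fields vanishes on
functions vanishing on some finite set. -/
lemma aux13_vanish (φ : (α → F) →ₗ[F] F) (hφ : Continuous φ) :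
    ∃ S : Finset α, ∀ y : α → F, (∀ i ∈ S, y i = 0) → φ y = 0 := by
  have h : IsOpen ((φ : (α → F) → F) ⁻¹' {0}) := (isOpen_discrete _).preimage hφ
  rw [isOpen_pi_iff] at h
  obtain ⟨I, u, hu, hsub⟩ := h 0 (by simp)
  refine ⟨I, fun y hy => ?_⟩
  have hmem : y ∈ (I : Set α).pi u := fun i hi => by
    rw [hy i hi]
    simpa using (hu i hi).2
  exact hsub hmem

lemma aux13_repr [DecidableEq α] (φ : (α → F) →ₗ[F] F) (S : Finset α)
    (hS : ∀ y : α → F, (∀ i ∈ S, y i = 0) → φ y = 0) (y : α → F) :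
    φ y = ∑ i ∈ S, y i * φ (Pi.single i (1 : F)) := by
  have hz : φ (y - ∑ i ∈ S, y i • (Pi.single i (1 : F) : α → F)) = 0 := by
    refine hS _ fun i hi => ?_
    simp only [Pi.sub_apply, Finset.sum_apply, Pi.smul_apply, Pi.single_apply,
      smul_eq_mul, mul_ite, mul_one, mul_zero]
    rw [Finset.sum_ite_eq S i y]
    simp [hi]
  rw [map_sub, sub_eq_zero] at hz
  rw [hz, map_sum]
  simp [smul_eq_mul]

lemma aux13_single_finsum {β : Type*} [DecidableEq β] (j : β) (c : β → F) :
    ∑ᶠ j', (Finsupp.single j (1 : F) : β →₀ F) j' * c j' = c j := by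
  rw [finsum_eq_single _ j]
  · simp
  · intro j' hj'
    rw [Finsupp.single_eq_of_ne' (Ne.symm hj'), zero_mul]

lemma aux13_pi_single [DecidableEq α] (i : α) (c : α → F) :
    ∑ᶠ i', c i' * (Pi.single i (1 : F) : α → F) i' = c i := by
  rw [finsum_eq_single _ i]
  · simp
  · intro i' hi'
    rw [Pi.single_eq_of_ne hi', mul_zero]

end Aux

theorem stmt_13 (F : Type*) [Field F] [TopologicalSpace F] [DiscreteTopology F]
    (α β : Type*) [Countable α] [Countable β] :
    (∀ f : (β →₀ F) →ₗ[F] (α →₀ F),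
      ∃! g : { g : (α → F) →ₗ[F] (β → F) // Continuous g },
        ∀ (x : β →₀ F) (y : α → F),
          ∑ᶠ i, f x i * y i = ∑ᶠ j, x j * g.1 y j) ∧
    (∀ g : (α → F) →ₗ[F] (β → F), Continuous g →
      ∃! f : (β →₀ F) →ₗ[F] (α →₀ F),
        ∀ (x : β →₀ F) (y : α → F),
          ∑ᶠ i, f x i * y i = ∑ᶠ j, x j * g y j) := by
  classical
  haveI : IsTopologicalRing F :=
    { continuous_add := continuous_of_discreteTopology
      continuous_mul := continuous_of_discreteTopology
      continuous_neg := continuous_of_discreteTopology }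
  constructor
  · -- forward direction: from f to g
    intro f
    set e : β → (α →₀ F) := fun j => f (Finsupp.single j 1) with he
    set φ : β → ((α → F) →ₗ[F] F) :=
      fun j => ∑ i ∈ (e j).support, (e j) i • LinearMap.proj i with hφ
    have hφapp : ∀ j y, φ j y = ∑ i ∈ (e j).support, e j i * y i := by
      intro j y
      simp [hφ, LinearMap.sum_apply, LinearMap.smul_apply, LinearMap.proj_apply, smul_eq_mul]
    set g : (α → F) →ₗ[F] (β → F) := LinearMap.pi φ with hg
    have hgj : ∀ y j, g y j = φ j y := fun y j => rfl
    have hgcont : Continuous g := by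
      refine continuous_pi fun j => ?_
      have : (fun y => g y j) = fun y => ∑ i ∈ (e j).support, e j i * y i :=
        funext fun y => by rw [hgj, hφapp]
      rw [this]
      exact continuous_finset_sum _ fun i _ => continuous_const.mul (continuous_apply i)
    have hfx : ∀ x : β →₀ F, f x = ∑ j ∈ x.support, x j • e j := by
      intro x
      conv_lhs => rw [← Finsupp.sum_single x, Finsupp.sum, map_sum]
      refine Finset.sum_congr rfl fun j hj => ?_
      rw [he, ← Finsupp.smul_single_one, map_smul]
    have hkey : ∀ (x : β →₀ F) (y : α → F),
        ∑ᶠ i, f x i * y i = ∑ᶠ j, x j * g y j := by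
      intro x y
      set T := x.support.biUnion (fun j => (e j).support) with hT
      have hsuppfx : (f x).support ⊆ T := by
        rw [hfx]
        refine Finsupp.support_finset_sum.trans ?_
        intro i hi
        rw [Finset.mem_biUnion] at hi ⊢
        obtain ⟨j, hj, hij⟩ := hi
        exact ⟨j, hj, Finsupp.support_smul hij⟩
      have h1 : ∑ᶠ i, f x i * y i = ∑ i ∈ T, f x i * y i := by
        refine finsum_eq_sum_of_support_subset _ ?_
        intro i hi
        exact hsuppfx (Finsupp.mem_support_iff.mpr (left_ne_zero_of_mul hi))
      have h2 : ∑ᶠ j, x j * g y j = ∑ j ∈ x.support, x j * g y j := by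
        refine finsum_eq_sum_of_support_subset _ ?_
        intro j hj
        exact Finsupp.mem_support_iff.mpr (left_ne_zero_of_mul hj)
      rw [h1, h2]
      have h3 : ∀ i, f x i * y i = ∑ j ∈ x.support, x j * e j i * y i := by
        intro i
        rw [hfx, Finsupp.finset_sum_apply, Finset.sum_mul]
        refine Finset.sum_congr rfl fun j hj => ?_
        rw [Finsupp.smul_apply, smul_eq_mul]
      simp only [h3]
      rw [Finset.sum_comm]
      refine Finset.sum_congr rfl fun j hj => ?_
      have hsub : (e j).support ⊆ T := fun i hi =>
        Finset.mem_biUnion.mpr ⟨j, hj, hi⟩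
      have hsum : ∑ i ∈ (e j).support, e j i * y i = ∑ i ∈ T, e j i * y i :=
        Finset.sum_subset hsub (fun i _ hnot => by
          simp [Finsupp.notMem_support_iff.mp hnot])
      rw [hgj, hφapp, hsum, Finset.mul_sum]
      exact Finset.sum_congr rfl fun i _ => by ring
    refine ⟨⟨g, hgcont⟩, hkey, ?_⟩
    rintro ⟨g', hg'c⟩ hg'
    refine Subtype.ext (LinearMap.ext fun y => funext fun j => ?_)
    have h1 := hg' (Finsupp.single j 1) y
    have h2 := hkey (Finsupp.single j 1) y
    simp only at h1 h2
    rw [aux13_single_finsum j] at h1 h2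
    rw [← h1, h2]
  · -- reverse direction: from g to f
    intro g hg
    set φ : β → ((α → F) →ₗ[F] F) := fun j => (LinearMap.proj j).comp g with hφ
    have hφapp : ∀ j y, φ j y = g y j := fun j y => rfl
    have hφc : ∀ j, Continuous (φ j) := fun j => (continuous_apply j).comp hg
    choose S hS using fun j => aux13_vanish (φ j) (hφc j)
    have hw0 : ∀ j i, i ∉ S j → g (Pi.single i 1) j = 0 := by
      intro j i hiS
      exact hS j _ fun i' hi' =>
        Pi.single_eq_of_ne (fun h => hiS (by rw [← h]; exact hi')) 1
    have hwfin : ∀ j, (Function.support fun i => g (Pi.single i 1) j).Finite := by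
      intro j
      refine Set.Finite.subset (S j).finite_toSet fun i hi => ?_
      by_contra hiS
      exact hi (hw0 j i hiS)
    set v : β → (α →₀ F) := fun j => Finsupp.ofSupportFinite _ (hwfin j) with hv
    have hvapp : ∀ j i, v j i = g (Pi.single i 1) j := fun j i => rfl
    have hvS : ∀ j, (v j).support ⊆ S j := by
      intro j i hi
      by_contra hiS
      exact Finsupp.mem_support_iff.mp hi ((hvapp j i).trans (hw0 j i hiS))
    set f : (β →₀ F) →ₗ[F] (α →₀ F) :=
      Finsupp.lsum F (fun j => (LinearMap.id : F →ₗ[F] F).smulRight (v j)) with hf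
    have hfapp : ∀ (x : β →₀ F), f x = ∑ j ∈ x.support, x j • v j := by
      intro x
      rw [hf, Finsupp.lsum_apply, Finsupp.sum]
      refine Finset.sum_congr rfl fun j hj => ?_
      rw [LinearMap.smulRight_apply, LinearMap.id_apply]
    have hgyj : ∀ (y : α → F) j, g y j = ∑ i ∈ S j, y i * v j i := by
      intro y j
      have := aux13_repr (φ j) (S j) (hS j) y
      rw [hφapp] at this
      rw [this]
      refine Finset.sum_congr rfl fun i _ => ?_
      rw [hφapp, hvapp]
    have hkey : ∀ (x : β →₀ F) (y : α → F),
        ∑ᶠ i, f x i * y i = ∑ᶠ j, x j * g y j := by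
      intro x y
      set T := x.support.biUnion (fun j => (v j).support) with hT
      have hsuppfx : (f x).support ⊆ T := by
        rw [hfapp]
        refine Finsupp.support_finset_sum.trans ?_
        intro i hi
        rw [Finset.mem_biUnion] at hi ⊢
        obtain ⟨j, hj, hij⟩ := hi
        exact ⟨j, hj, Finsupp.support_smul hij⟩
      have h1 : ∑ᶠ i, f x i * y i = ∑ i ∈ T, f x i * y i := by
        refine finsum_eq_sum_of_support_subset _ ?_
        intro i hi
        exact hsuppfx (Finsupp.mem_support_iff.mpr (left_ne_zero_of_mul hi))
      have h2 : ∑ᶠ j, x j * g y j = ∑ j ∈ x.support, x j * g y j := by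
        refine finsum_eq_sum_of_support_subset _ ?_
        intro j hj
        exact Finsupp.mem_support_iff.mpr (left_ne_zero_of_mul hj)
      rw [h1, h2]
      have h3 : ∀ i, f x i * y i = ∑ j ∈ x.support, x j * v j i * y i := by
        intro i
        rw [hfapp, Finsupp.finset_sum_apply, Finset.sum_mul]
        refine Finset.sum_congr rfl fun j hj => ?_
        rw [Finsupp.smul_apply, smul_eq_mul]
      simp only [h3]
      rw [Finset.sum_comm]
      refine Finset.sum_congr rfl fun j hj => ?_
      have hsubT : (v j).support ⊆ T := fun i hi =>
        Finset.mem_biUnion.mpr ⟨j, hj, hi⟩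
      have hsum1 : ∑ i ∈ (v j).support, y i * v j i = ∑ i ∈ S j, y i * v j i :=
        Finset.sum_subset (hvS j) (fun i _ hnot => by
          simp [Finsupp.notMem_support_iff.mp hnot])
      have hsum2 : ∑ i ∈ (v j).support, v j i * y i = ∑ i ∈ T, v j i * y i :=
        Finset.sum_subset hsubT (fun i _ hnot => by
          simp [Finsupp.notMem_support_iff.mp hnot])
      calc ∑ i ∈ T, x j * v j i * y i
          = x j * ∑ i ∈ T, v j i * y i := by
            rw [Finset.mul_sum]; exact Finset.sum_congr rfl fun i _ => by ring
        _ = x j * ∑ i ∈ (v j).support, v j i * y i := by rw [hsum2]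
        _ = x j * ∑ i ∈ (v j).support, y i * v j i := by
            congr 1; exact Finset.sum_congr rfl fun i _ => mul_comm _ _
        _ = x j * ∑ i ∈ S j, y i * v j i := by rw [hsum1]
        _ = x j * g y j := by rw [hgyj]
    refine ⟨f, hkey, ?_⟩
    intro f' hf'
    refine LinearMap.ext fun x => Finsupp.ext fun i => ?_
    have h1 := hf' x (Pi.single i 1)
    have h2 := hkey x (Pi.single i 1)
    rw [aux13_pi_single i] at h1 h2
    rw [h1, ← h2]
end

section
/- The dualization map f ↦ Hom(f,F) from Hom(F^(β), F^(α)) to the continuous linear maps F^α → F^β is surjective: every continuous linear map g : F^α → F^β (F discrete, products with product topology, α, β countable) equals Hom(f,F) for some linear map f : F^(β) → F^(α). -/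
open Finsupp

theorem aux_repr (F : Type*) [Field F] [TopologicalSpace F] [DiscreteTopology F]
    (α : Type*) (φ : (α → F) →ₗ[F] F) (hφ : Continuous φ) :
    ∃ c : α →₀ F, ∀ y : α → F, φ y = c.sum (fun i r => r * y i) := by
  have h0 : φ ⁻¹' {0} ∈ nhds (0 : α → F) :=
    hφ.continuousAt.preimage_mem_nhds ((isOpen_discrete {(0:F)}).mem_nhds (by simp))
  rw [nhds_pi, Filter.mem_pi] at h0
  obtain ⟨I, hI, V, hV, hsub⟩ := h0
  have hzero : ∀ y : α → F, (∀ i ∈ I, y i = 0) → φ y = 0 := by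
    intro y hy
    have : y ∈ I.pi V := by
      intro i hi
      rw [hy i hi]
      exact mem_of_mem_nhds (hV i)
    simpa using hsub this
  classical
  haveI := Classical.decEq α
  set t := hI.toFinset with ht
  refine ⟨∑ i ∈ t, Finsupp.single i (φ ((Pi.single i (1:F) : α → F))), fun y => ?_⟩
  have key : φ y = φ (∑ i ∈ t, y i • (Pi.single i (1:F) : α → F)) := by
    have : φ (y - ∑ i ∈ t, y i • (Pi.single i (1:F) : α → F)) = 0 := by
      apply hzero
      intro i hi
      have hit : i ∈ t := hI.mem_toFinset.mpr hi
      simp only [Pi.sub_apply, Finset.sum_apply, Pi.smul_apply, Pi.single_apply,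
        smul_eq_mul, mul_ite, mul_one, mul_zero]
      rw [Finset.sum_ite_eq t i y]
      simp [hit]
    rw [map_sub, sub_eq_zero] at this
    exact this
  rw [key, map_sum]
  rw [← Finsupp.sum_finset_sum_index (by simp) (by intros; rw [add_mul])]
  refine Finset.sum_congr rfl fun i _ => ?_
  rw [Finsupp.sum_single_index (by rw [zero_mul]), map_smul, smul_eq_mul, mul_comm]

theorem stmt_15 (F : Type*) [Field F] [TopologicalSpace F] [DiscreteTopology F]
    (α β : Type*) [Countable α] [Countable β]
    (g : (α → F) →ₗ[F] (β → F)) (hg : Continuous g) :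
    ∃ f : (β →₀ F) →ₗ[F] (α →₀ F),
      ∀ (x : β →₀ F) (y : α → F),
        ∑ᶠ i, f x i * y i = ∑ᶠ j, x j * g y j := by
  classical
  have hrepr : ∀ j : β, ∃ c : α →₀ F, ∀ y : α → F,
      g y j = c.sum (fun i r => r * y i) := by
    intro j
    exact aux_repr F α ((LinearMap.proj j).comp g) ((continuous_apply j).comp hg)
  choose c hc using hrepr
  refine ⟨Finsupp.lsum F (fun j => LinearMap.toSpanSingleton F (α →₀ F) (c j)), ?_⟩
  intro x y
  set f := Finsupp.lsum F (fun j => LinearMap.toSpanSingleton F (α →₀ F) (c j)) with hf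
  have hL : ∑ᶠ i, f x i * y i = (f x).sum (fun i r => r * y i) := by
    rw [Finsupp.sum]
    apply finsum_eq_finset_sum_of_support_subset
    intro i hi
    simp only [Function.mem_support] at hi
    simp only [Finset.mem_coe, Finsupp.mem_support_iff]
    intro h
    exact hi (by rw [h, zero_mul])
  have hR : ∑ᶠ j, x j * g y j = x.sum (fun j r => r * g y j) := by
    rw [Finsupp.sum]
    apply finsum_eq_finset_sum_of_support_subset
    intro j hj
    simp only [Function.mem_support] at hj
    simp only [Finset.mem_coe, Finsupp.mem_support_iff]
    intro h
    exact hj (by rw [h, zero_mul])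
  rw [hL, hR]
  -- both sides are linear in x
  have : (f x).sum (fun i r => r * y i) = Finsupp.linearCombination F y (f x) := by
    rw [Finsupp.linearCombination_apply]; rfl
  rw [this]
  have : x.sum (fun j r => r * g y j) = Finsupp.linearCombination F (g y) x := by
    rw [Finsupp.linearCombination_apply]; rfl
  rw [this]
  have := LinearMap.congr_fun (f := ((Finsupp.linearCombination F y).comp f))
    (g := Finsupp.linearCombination F (g y)) ?_ x
  · exact this
  · apply Finsupp.lhom_ext
    intro j r
    simp only [LinearMap.comp_apply, hf, Finsupp.lsum_single,
      LinearMap.toSpanSingleton_apply, map_smul, Finsupp.linearCombination_single]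
    rw [smul_eq_mul, smul_eq_mul]
    congr 1
    rw [hc j y, Finsupp.linearCombination_apply, Finsupp.sum]
    exact Finset.sum_congr rfl fun i _ => rfl
end

section
/- Let W be a topological F-vector space (F discrete) that is Hausdorff and complete, and admits a decreasing chain of open subspaces W = V_0 ⊃ V_1 ⊃ ⋯ forming a neighborhood basis of 0 with dim(W/V_n) = n for all n. Then W is isomorphic as a topological vector space to F^ℕ with the product topology. -/
open Finset Submodule

section Aux

variable {F : Type*} [Field F] {W : Type*} [AddCommGroup W] [Module F W]
  (V : ℕ → Submodule F W)

/-- Independence lemma: if a combination of the chosen vectors lies deep, the coefficients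
vanish. -/
theorem aux_indep (hanti : ∀ m n : ℕ, m ≤ n → V n ≤ V m)
    (e : ℕ → W) (he1 : ∀ n, e n ∈ V n) (he2 : ∀ n, e n ∉ V (n + 1))
    (n : ℕ) (a : ℕ → F) (h : (∑ i ∈ Finset.range n, a i • e i) ∈ V n) :
    ∀ i < n, a i = 0 := by
  by_contra hc
  push_neg at hc
  obtain ⟨i₀, hi₀n, hi₀⟩ := hc
  have hP : ∃ i, i < n ∧ a i ≠ 0 := ⟨i₀, hi₀n, hi₀⟩
  classical
  let i := Nat.find hP
  obtain ⟨hin, hai⟩ := Nat.find_spec hP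
  have hmin : ∀ j < i, a j = 0 := by
    intro j hj
    have h := Nat.find_min hP hj
    push_neg at h
    exact h (hj.trans hin)
  -- split the sum
  have hsplit : (∑ j ∈ Finset.range n, a j • e j)
      = a i • e i + ∑ j ∈ Finset.Ico (i+1) n, a j • e j := by
    rw [← Finset.sum_range_add_sum_Ico _ (Nat.succ_le_of_lt hin), Finset.sum_range_succ]
    have : ∑ j ∈ Finset.range i, a j • e j = 0 := by
      apply Finset.sum_eq_zero
      intro j hj
      rw [hmin j (Finset.mem_range.mp hj), zero_smul]
    rw [this, zero_add]
  have htail : (∑ j ∈ Finset.Ico (i+1) n, a j • e j) ∈ V (i+1) := by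
    apply Submodule.sum_mem
    intro j hj
    exact Submodule.smul_mem _ _ (hanti (i+1) j (Finset.mem_Ico.mp hj).1 (he1 j))
  have hmem : a i • e i ∈ V (i+1) := by
    have h' : (∑ j ∈ Finset.range n, a j • e j) ∈ V (i+1) :=
      hanti (i+1) n (Nat.succ_le_of_lt hin) h
    rw [hsplit] at h'
    have := Submodule.sub_mem _ h' htail
    simpa using this
  exact he2 i (by have h2 := Submodule.smul_mem _ (a i)⁻¹ hmem; rwa [smul_smul, inv_mul_cancel₀ hai, one_smul] at h2)

end Aux

theorem stmt_18 (F : Type*) [Field F] [TopologicalSpace F] [DiscreteTopology F]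
    (W : Type*) [AddCommGroup W] [Module F W] [TopologicalSpace W]
    [IsTopologicalAddGroup W] [ContinuousSMul F W] [T2Space W]
    (V : ℕ → Submodule F W)
    (hV0 : V 0 = ⊤)
    (hanti : ∀ m n : ℕ, m ≤ n → V n ≤ V m)
    (hopen : ∀ n, IsOpen (V n : Set W))
    (hbasis : (nhds (0 : W)).HasBasis (fun _ : ℕ => True) (fun n => (V n : Set W)))
    (hdim : ∀ n, Module.rank F (W ⧸ V n) = n)
    (hcomplete : ∀ x : ∀ n : ℕ, W ⧸ V n,
      (∀ m n : ℕ, (h : m ≤ n) →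
        Submodule.mapQ (V n) (V m) LinearMap.id (hanti m n h) (x n) = x m) →
      ∃ w : W, ∀ n, Submodule.Quotient.mk w = x n) :
    ∃ e : W ≃ₗ[F] (ℕ → F), Continuous e ∧ Continuous e.symm := by
  classical
  -- choose vectors eₙ ∈ V n \ V (n+1)
  have hlt : ∀ n : ℕ, ∃ v : W, v ∈ V n ∧ v ∉ V (n + 1) := by
    intro n
    by_contra hc
    push_neg at hc
    have heq : V n = V (n + 1) :=
      le_antisymm (fun v hv => hc v hv) (hanti n (n+1) (Nat.le_succ n))
    have h1 := hdim n
    have h2 := hdim (n+1)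
    rw [heq] at h1
    rw [h1] at h2
    exact absurd (Nat.cast_injective h2) (by omega)
  set e : ℕ → W := fun n => Classical.choose (hlt n) with he_def
  have he1 : ∀ n, e n ∈ V n := fun n => (Classical.choose_spec (hlt n)).1
  have he2 : ∀ n, e n ∉ V (n + 1) := fun n => (Classical.choose_spec (hlt n)).2
  have hindep := aux_indep V hanti e he1 he2
  -- spanning step: every v ∈ V n is congruent to a multiple of e n mod V (n+1)
  have hspan : ∀ n, ∀ v ∈ V n, ∃ a : F, v - a • e n ∈ V (n + 1) := by
    intro n v hv
    set Q := W ⧸ V (n + 1)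
    have hrank : Module.rank F Q = (n + 1 : ℕ) := by exact_mod_cast hdim (n+1)
    haveI : FiniteDimensional F Q := by
      refine FiniteDimensional.of_rank_eq_nat hrank
    have hfinrank : Module.finrank F Q = n + 1 :=
      Module.finrank_eq_of_rank_eq hrank
    set q : Fin (n + 1) → Q := fun i => Submodule.Quotient.mk (e i) with hq_def
    have hq_indep : LinearIndependent F q := by
      rw [Fintype.linearIndependent_iff]
      intro g hg i
      set a : ℕ → F := fun j => if h : j < n + 1 then g ⟨j, h⟩ else 0 with ha_def
      have heqsum : ∑ j ∈ Finset.range (n+1), a j • e j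
          = ∑ i : Fin (n+1), g i • e (i : ℕ) := by
        rw [← Fin.sum_univ_eq_sum_range (fun j => a j • e j) (n+1)]
        exact Finset.sum_congr rfl fun i _ => by simp [ha_def, Fin.is_le]
      have hsum : (∑ j ∈ Finset.range (n+1), a j • e j) ∈ V (n + 1) := by
        rw [heqsum, ← Submodule.Quotient.mk_eq_zero, ← Submodule.mkQ_apply, map_sum]
        simp only [map_smul, Submodule.mkQ_apply]
        simpa [hq_def] using hg
      have h := hindep (n+1) a hsum i i.isLt
      simpa [ha_def, Fin.is_le] using h
    have hq_span : Submodule.span F (Set.range q) = ⊤ :=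
      hq_indep.span_eq_top_of_card_eq_finrank (by simp [hfinrank])
    have hvmem : (Submodule.Quotient.mk v : Q) ∈ Submodule.span F (Set.range q) := by
      rw [hq_span]; trivial
    obtain ⟨g, hg⟩ := (mem_span_range_iff_exists_fun F).mp hvmem
    set a : ℕ → F := fun j => if h : j < n + 1 then g ⟨j, h⟩ else 0 with ha_def
    have heqsum : ∑ j ∈ Finset.range (n+1), a j • e j
        = ∑ i : Fin (n+1), g i • e (i : ℕ) := by
      rw [← Fin.sum_univ_eq_sum_range (fun j => a j • e j) (n+1)]
      exact Finset.sum_congr rfl fun i _ => by simp [ha_def, Fin.is_le]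
    have hmk : (Submodule.Quotient.mk (∑ j ∈ Finset.range (n+1), a j • e j) : Q)
        = Submodule.Quotient.mk v := by
      rw [heqsum, ← Submodule.mkQ_apply, map_sum]
      simp only [map_smul, Submodule.mkQ_apply]
      simpa [hq_def] using hg
    have hdiff : v - (∑ j ∈ Finset.range (n+1), a j • e j) ∈ V (n + 1) :=
      (Submodule.Quotient.eq _).mp hmk.symm
    -- now the first n coefficients vanish
    have hzero : ∀ i < n, a i = 0 := by
      have hsum_mem : (∑ j ∈ Finset.range n, a j • e j) ∈ V n := by
        have h1 : (∑ j ∈ Finset.range (n+1), a j • e j) ∈ V n := by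
          have hv' : v - (∑ j ∈ Finset.range (n+1), a j • e j) ∈ V n :=
            hanti n (n+1) (Nat.le_succ n) hdiff
          have := Submodule.sub_mem _ hv hv'
          simpa using this
        rw [Finset.sum_range_succ] at h1
        have := Submodule.sub_mem _ h1 (Submodule.smul_mem _ (a n) (he1 n))
        simpa using this
      exact hindep n a hsum_mem
    refine ⟨a n, ?_⟩
    have hsum_eq : (∑ j ∈ Finset.range (n+1), a j • e j) = a n • e n := by
      rw [Finset.sum_range_succ]
      have : ∑ j ∈ Finset.range n, a j • e j = 0 :=
        Finset.sum_eq_zero fun j hj => by rw [hzero j (Finset.mem_range.mp hj), zero_smul]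
      rw [this, zero_add]
    rwa [hsum_eq] at hdiff
  -- existence of the coordinate sequence
  have hex : ∀ w : W, ∃ a : ℕ → F, ∀ n, w - ∑ i ∈ Finset.range n, a i • e i ∈ V n := by
    intro w
    let step : ∀ n, {v : W // v ∈ V n} → {v : W // v ∈ V (n+1)} := fun n p =>
      ⟨p.1 - Classical.choose (hspan n p.1 p.2) • e n, Classical.choose_spec (hspan n p.1 p.2)⟩
    let r : ∀ n : ℕ, {v : W // v ∈ V n} := fun n =>
      Nat.rec ⟨w, hV0 ▸ Submodule.mem_top⟩ step n
    set a : ℕ → F := fun n => Classical.choose (hspan n (r n).1 (r n).2) with ha_def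
    have key : ∀ n, (r n).1 = w - ∑ i ∈ Finset.range n, a i • e i := by
      intro n
      induction n with
      | zero => simp [r]
      | succ k ih =>
        have hstep : (r (k+1)).1 = (r k).1 - a k • e k := rfl
        rw [hstep, ih, Finset.sum_range_succ]
        abel
    exact ⟨a, fun n => (key n) ▸ (r n).2⟩
  -- uniqueness of coordinates
  have huniq : ∀ (a : ℕ → F), (∀ n, (∑ i ∈ Finset.range n, a i • e i) ∈ V n) → a = 0 := by
    intro a ha
    funext i
    exact hindep (i+1) a (ha (i+1)) i (Nat.lt_succ_self i)
  set c : W → ℕ → F := fun w => Classical.choose (hex w) with hc_def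
  have hc : ∀ w n, w - ∑ i ∈ Finset.range n, c w i • e i ∈ V n :=
    fun w => Classical.choose_spec (hex w)
  have hchar : ∀ (w : W) (a : ℕ → F),
      (∀ n, w - ∑ i ∈ Finset.range n, a i • e i ∈ V n) → c w = a := by
    intro w a ha
    have hd : ∀ n, (∑ i ∈ Finset.range n, (c w i - a i) • e i) ∈ V n := by
      intro n
      have := Submodule.sub_mem _ (ha n) (hc w n)
      have heq : (w - ∑ i ∈ Finset.range n, a i • e i)
          - (w - ∑ i ∈ Finset.range n, c w i • e i)
          = ∑ i ∈ Finset.range n, (c w i - a i) • e i := by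
        have h1 : ∑ i ∈ Finset.range n, (c w i - a i) • e i
            = (∑ i ∈ Finset.range n, c w i • e i) - ∑ i ∈ Finset.range n, a i • e i := by
          rw [← Finset.sum_sub_distrib]
          exact Finset.sum_congr rfl fun i _ => sub_smul _ _ _
        rw [h1]
        abel
      rw [heq] at this
      exact this
    have := huniq _ hd
    funext i
    have h := congrFun this i
    simp only [Pi.zero_apply, sub_eq_zero] at h
    exact h
  -- linearity
  have hc_add : ∀ w w' : W, c (w + w') = c w + c w' := by
    intro w w'
    apply hchar
    intro n
    have h1 := hc w n
    have h2 := hc w' n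
    have := Submodule.add_mem _ h1 h2
    have heq : (w - ∑ i ∈ Finset.range n, c w i • e i)
        + (w' - ∑ i ∈ Finset.range n, c w' i • e i)
        = (w + w') - ∑ i ∈ Finset.range n, (c w + c w') i • e i := by
      simp only [Pi.add_apply, add_smul, Finset.sum_add_distrib]
      abel
    rwa [heq] at this
  have hc_smul : ∀ (s : F) (w : W), c (s • w) = s • c w := by
    intro s w
    apply hchar
    intro n
    have h1 := Submodule.smul_mem _ s (hc w n)
    have heq : s • (w - ∑ i ∈ Finset.range n, c w i • e i)
        = s • w - ∑ i ∈ Finset.range n, (s • c w) i • e i := by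
      rw [smul_sub, Finset.smul_sum]
      congr 1
      apply Finset.sum_congr rfl
      intro i _
      rw [Pi.smul_apply, smul_smul, smul_eq_mul]
    rwa [heq] at h1
  set L : W →ₗ[F] (ℕ → F) :=
    { toFun := c
      map_add' := hc_add
      map_smul' := hc_smul } with hL_def
  -- separation
  have hsep : ∀ w : W, (∀ n, w ∈ V n) → w = 0 := by
    intro w hw
    by_contra hne
    have hop : IsOpen ({w}ᶜ : Set W) := isOpen_compl_singleton
    have h0 : ({w}ᶜ : Set W) ∈ nhds (0 : W) :=
      hop.mem_nhds (by simp [Ne.symm hne])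
    obtain ⟨n, -, hn⟩ := hbasis.mem_iff.mp h0
    exact hn (hw n) rfl
  -- injectivity
  have hinj : Function.Injective L := by
    rw [injective_iff_map_eq_zero]
    intro w hw
    apply hsep
    intro n
    have := hc w n
    have hcw : c w = 0 := hw
    simpa [hcw] using this
  -- surjectivity
  have hsurj : Function.Surjective L := by
    intro a
    set x : ∀ n : ℕ, W ⧸ V n :=
      fun n => Submodule.Quotient.mk (∑ i ∈ Finset.range n, a i • e i) with hx_def
    have hcompat : ∀ m n : ℕ, (h : m ≤ n) →
        Submodule.mapQ (V n) (V m) LinearMap.id (hanti m n h) (x n) = x m := by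
      intro m n h
      rw [hx_def]
      rw [Submodule.mapQ_apply]
      rw [LinearMap.id_apply]
      rw [Submodule.Quotient.eq]
      rw [← Finset.sum_Ico_eq_sub _ h]
      apply Submodule.sum_mem
      intro i hi
      exact Submodule.smul_mem _ _ (hanti m i (Finset.mem_Ico.mp hi).1 (he1 i))
    obtain ⟨w, hw⟩ := hcomplete x hcompat
    refine ⟨w, ?_⟩
    show c w = a
    apply hchar
    intro n
    have := hw n
    rw [hx_def] at this
    rwa [← Submodule.Quotient.eq]
  set E : W ≃ₗ[F] (ℕ → F) := LinearEquiv.ofBijective L ⟨hinj, hsurj⟩ with hE_def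
  refine ⟨E, ?_, ?_⟩
  · -- continuity of E
    have hE_apply : ∀ w, E w = c w := fun w => rfl
    apply continuous_pi
    intro n
    rw [continuous_iff_continuousAt]
    intro w
    have hloc : ∀ w' : W, w' - w ∈ V (n+1) → c w' n = c w n := by
      intro w' hw'
      have hk : (∑ i ∈ Finset.range (n+1), (c w i - c w' i) • e i) ∈ V (n+1) := by
        have h1 := hc w (n+1)
        have h2 := hc w' (n+1)
        have h3 := Submodule.sub_mem _ (Submodule.sub_mem _ h2 h1) hw'
        have heq : (w' - ∑ i ∈ Finset.range (n+1), c w' i • e i)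
            - (w - ∑ i ∈ Finset.range (n+1), c w i • e i) - (w' - w)
            = ∑ i ∈ Finset.range (n+1), (c w i - c w' i) • e i := by
          rw [show ∑ i ∈ Finset.range (n+1), (c w i - c w' i) • e i
            = ∑ i ∈ Finset.range (n+1), (c w i • e i - c w' i • e i) from
              Finset.sum_congr rfl fun i _ => sub_smul _ _ _]
          rw [Finset.sum_sub_distrib]
          abel
        rwa [heq] at h3
      have := hindep (n+1) _ hk n (Nat.lt_succ_self n)
      have h := sub_eq_zero.mp this
      rw [h]
    have hU : {w' : W | w' - w ∈ V (n+1)} ∈ nhds w := by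
      have hopen' : IsOpen {w' : W | w' - w ∈ V (n+1)} := by
        have : {w' : W | w' - w ∈ V (n+1)} = (fun w' => w' - w) ⁻¹' (V (n+1) : Set W) := rfl
        rw [this]
        exact (hopen (n+1)).preimage (continuous_id.sub continuous_const)
      exact hopen'.mem_nhds (by simp)
    have hev : (fun w' => E w' n) =ᶠ[nhds w] fun _ => E w n := by
      apply Filter.eventually_of_mem hU
      intro w' hw'
      simp only [hE_apply]
      exact hloc w' hw'
    exact hev.continuousAt
  · -- continuity of E.symm
    haveI : IsTopologicalAddGroup F :=
      { toContinuousAdd := inferInstance, toContinuousNeg := inferInstance }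
    haveI : IsTopologicalAddGroup (ℕ → F) := Pi.topologicalAddGroup
    apply continuous_of_continuousAt_zero (E.symm : (ℕ → F) →ₗ[F] W)
    rw [ContinuousAt]
    have h0 : (E.symm : (ℕ → F) →ₗ[F] W) 0 = 0 := map_zero _
    rw [show ((E.symm : (ℕ → F) →ₗ[F] W) : (ℕ → F) → W) 0 = 0 from map_zero _]
    rw [hbasis.tendsto_right_iff]
    intro n _
    have hmem : {a : ℕ → F | ∀ i < n, a i = 0} ∈ nhds (0 : ℕ → F) := by
      have : {a : ℕ → F | ∀ i < n, a i = 0}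
          = ⋂ i ∈ Finset.range n, {a : ℕ → F | a i = 0} := by
        ext a
        simp [Finset.mem_range]
      rw [this]
      refine (Filter.biInter_finset_mem _).mpr fun i _ => ?_
      have hop : IsOpen {a : ℕ → F | a i = 0} := by
        have heq : {a : ℕ → F | a i = 0} = (fun a : ℕ → F => a i) ⁻¹' {0} := by
          ext a; simp
        rw [heq]
        exact (isOpen_discrete ({0} : Set F)).preimage (continuous_apply i)
      exact hop.mem_nhds (by simp)
    apply Filter.eventually_of_mem hmem
    intro a ha
    show E.symm a ∈ V n
    set w := E.symm a with hw_def
    have hca : c w = a := by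
      have : E w = a := E.apply_symm_apply a
      exact this
    have := hc w n
    have hz : ∑ i ∈ Finset.range n, c w i • e i = 0 := by
      apply Finset.sum_eq_zero
      intro i hi
      rw [hca, ha i (Finset.mem_range.mp hi), zero_smul]
    rwa [hz, sub_zero] at this
end
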